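/- Suppose 0 < x₁ < x₂, and for i = 1, 2 let yᵢ be the unique real number with yᵢ ≠ xᵢ and h(yᵢ) = h(xᵢ) + h′(xᵢ)·(yᵢ − xᵢ). Then h(y₁) − h(x₁) < h(y₂) − h(x₂); that is, the height-difference function B(x) = h(f(x)) − h(x) between the two intersection points of the tangent line at x with the graph of h is strictly increasing on (0, ∞). -/

import Mathlib

/-- The hill function `h(x) = arccos(tanh x)`. -/
noncomputable def hill (x : ℝ) : ℝ := Real.arccos (Real.tanh x)

/-- The derivative of the hill function: `h'(x) = -1/cosh x`. -/
noncomputable def hill' (x : ℝ) : ℝ := -1 / Real.cosh x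

private lemma tanh_lt_one' (x : ℝ) : Real.tanh x < 1 := by
  rw [Real.tanh_eq_sinh_div_cosh, div_lt_one (Real.cosh_pos x)]
  exact Real.sinh_lt_cosh x

private lemma neg_one_lt_tanh' (x : ℝ) : -1 < Real.tanh x := by
  have h := tanh_lt_one' (-x)
  rw [Real.tanh_neg] at h
  linarith

private lemma hasDerivAt_tanh' (x : ℝ) : HasDerivAt Real.tanh (1 / Real.cosh x ^ 2) x := by
  have h := (Real.hasDerivAt_sinh x).div (Real.hasDerivAt_cosh x) (Real.cosh_pos x).ne'
  have h1 : Real.cosh x * Real.cosh x - Real.sinh x * Real.sinh x = 1 := by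
    nlinarith [Real.cosh_sq_sub_sinh_sq x]
  have h2 : (Real.sinh / Real.cosh) = Real.tanh := by
    funext y; rw [Real.tanh_eq_sinh_div_cosh, Pi.div_apply]
  rw [h2, h1] at h
  exact h

private lemma hasDerivAt_hill (x : ℝ) : HasDerivAt hill (hill' x) x := by
  have ht := hasDerivAt_tanh' x
  have ha := Real.hasDerivAt_arccos (ne_of_gt (neg_one_lt_tanh' x)) (ne_of_lt (tanh_lt_one' x))
  have h := ha.comp x ht
  have hc := Real.cosh_pos x
  have key : 1 - Real.tanh x ^ 2 = (1 / Real.cosh x) ^ 2 := by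
    rw [Real.tanh_eq_sinh_div_cosh]
    field_simp
    exact Real.cosh_sq_sub_sinh_sq x
  have hsqrt : Real.sqrt (1 - Real.tanh x ^ 2) = 1 / Real.cosh x := by
    rw [key, Real.sqrt_sq (by positivity)]
  have heq : -(1 / Real.sqrt (1 - Real.tanh x ^ 2)) * (1 / Real.cosh x ^ 2) = hill' x := by
    rw [hsqrt, hill']
    field_simp
  rw [heq] at h
  exact h

private lemma hill_mvt {a b : ℝ} (hab : a < b) :
    ∃ c ∈ Set.Ioo a b, hill b - hill a = hill' c * (b - a) := by
  obtain ⟨c, hc, hceq⟩ := exists_hasDerivAt_eq_slope hill hill' hab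
    (fun t _ => (hasDerivAt_hill t).continuousAt.continuousWithinAt)
    (fun t _ => hasDerivAt_hill t)
  refine ⟨c, hc, ?_⟩
  have hba : b - a ≠ 0 := sub_ne_zero.2 hab.ne'
  rw [hceq]
  field_simp

private lemma hill'_lt_hill' {a b : ℝ} (h : Real.cosh a < Real.cosh b) : hill' a < hill' b := by
  have ha := Real.cosh_pos a
  rw [hill', hill', div_lt_div_iff₀ ha (lt_trans ha h)]
  nlinarith

private lemma hill_neg (t : ℝ) : hill (-t) = Real.pi - hill t := by
  rw [hill, hill, Real.tanh_neg, Real.arccos_neg]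

private lemma hill_zero : hill 0 = Real.pi / 2 := by
  rw [hill, Real.tanh_zero, Real.arccos_zero]

/-- Any second intersection point of the tangent at `x > 0` lies below `-x`. -/
private lemma second_point_lt {x y : ℝ} (hx : 0 < x) (hne : y ≠ x)
    (heq : hill y = hill x + hill' x * (y - x)) : y < -x := by
  by_contra hcon
  push_neg at hcon
  rcases lt_trichotomy y x with hyx | hyx | hyx
  · rcases le_or_gt 0 y with hy0 | hy0
    · -- 0 ≤ y < x
      obtain ⟨c, hc, hceq⟩ := hill_mvt hyx
      have hcc : Real.cosh c < Real.cosh x := by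
        rw [Real.cosh_lt_cosh]
        rw [abs_of_nonneg (le_trans hy0 hc.1.le), abs_of_pos hx]
        exact hc.2
      have := hill'_lt_hill' hcc
      nlinarith [hc.2, hc.1]
    · -- -x ≤ y < 0 ; set z = -y ∈ (0, x]
      set z := -y with hz
      have hz0 : 0 < z := by rw [hz]; linarith
      have hzx : z ≤ x := by rw [hz]; linarith
      obtain ⟨c₁, hc₁, hceq₁⟩ := hill_mvt hx
      obtain ⟨c₂, hc₂, hceq₂⟩ := hill_mvt hz0
      have hcc₁ : Real.cosh c₁ < Real.cosh x := by
        rw [Real.cosh_lt_cosh, abs_of_pos hc₁.1, abs_of_pos hx]; exact hc₁.2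
      have hcc₂ : Real.cosh c₂ < Real.cosh x := by
        rw [Real.cosh_lt_cosh, abs_of_pos hc₂.1, abs_of_pos hx]
        exact lt_of_lt_of_le hc₂.2 hzx
      have h1 := hill'_lt_hill' hcc₁
      have h2 := hill'_lt_hill' hcc₂
      have hyz : hill y = Real.pi - hill z := by rw [hz, hill_neg]; ring
      have h0 := hill_zero
      have hx' : hill' x < 0 := by
        rw [hill']; apply div_neg_of_neg_of_pos <;> [norm_num; exact Real.cosh_pos x]
      -- hill x - hill 0 = hill' c₁ * x, hill z - hill 0 = hill' c₂ * z
      -- equation: π - hill z - hill x = hill' x * (y - x) = -hill' x * (z + x)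
      nlinarith [hc₁.1, hc₂.1]
  · exact hne hyx
  · -- x < y
    obtain ⟨c, hc, hceq⟩ := hill_mvt hyx
    have hcc : Real.cosh x < Real.cosh c := by
      rw [Real.cosh_lt_cosh, abs_of_pos hx, abs_of_pos (lt_trans hx hc.1)]
      exact hc.1
    have := hill'_lt_hill' hcc
    nlinarith [hc.1]

/-- If `0 < x₁ < x₂` and `yᵢ` is the second intersection of the tangent line at `xᵢ`
with the graph of the hill function, then `h(y₁) - h(x₁) < h(y₂) - h(x₂)`: the
height-difference function `B(x) = h(f(x)) - h(x)` is strictly increasing on `(0, ∞)`. -/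
theorem hill_tangent_height_difference_monotone {x₁ x₂ y₁ y₂ : ℝ}
    (hx₁ : 0 < x₁) (hx₁₂ : x₁ < x₂)
    (hy₁ne : y₁ ≠ x₁) (hy₁ : hill y₁ = hill x₁ + hill' x₁ * (y₁ - x₁))
    (hy₂ne : y₂ ≠ x₂) (hy₂ : hill y₂ = hill x₂ + hill' x₂ * (y₂ - x₂)) :
    hill y₁ - hill x₁ < hill y₂ - hill x₂ := by
  have hx₂ : 0 < x₂ := lt_trans hx₁ hx₁₂
  have hY₁ : y₁ < -x₁ := second_point_lt hx₁ hy₁ne hy₁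
  have hY₂ : y₂ < -x₂ := second_point_lt hx₂ hy₂ne hy₂
  -- hill is strictly decreasing
  have hill_anti : ∀ a b : ℝ, a < b → hill b < hill a := by
    intro a b hab
    obtain ⟨c, _, hceq⟩ := hill_mvt hab
    have hc' : hill' c < 0 := by
      rw [hill']; apply div_neg_of_neg_of_pos <;> [norm_num; exact Real.cosh_pos c]
    nlinarith
  have hxx : hill x₂ < hill x₁ := hill_anti _ _ hx₁₂
  rcases le_or_gt y₂ y₁ with hyy | hyy
  · rcases eq_or_lt_of_le hyy with heq | hlt
    · rw [heq]; linarith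
    · have := hill_anti _ _ hlt; linarith
  · -- y₁ < y₂ < -x₂ : contradiction
    exfalso
    -- tangent at x₂ lies below graph at x₁ :
    obtain ⟨c, hc, hceq⟩ := hill_mvt hx₁₂
    have hcc : Real.cosh c < Real.cosh x₂ := by
      rw [Real.cosh_lt_cosh, abs_of_pos (lt_trans hx₁ hc.1), abs_of_pos hx₂]
      exact hc.2
    have hB : hill x₂ + hill' x₂ * (x₁ - x₂) < hill x₁ := by
      have := hill'_lt_hill' hcc
      nlinarith [hc.2]
    -- hill' x₁ < hill' x₂
    have h12 : hill' x₁ < hill' x₂ := by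
      apply hill'_lt_hill'
      rw [Real.cosh_lt_cosh, abs_of_pos hx₁, abs_of_pos hx₂]; exact hx₁₂
    -- P > 0
    have hP : hill y₁ - hill x₂ - hill' x₂ * (y₁ - x₂) > 0 := by
      have hprod : (hill' x₁ - hill' x₂) * (y₁ - x₁) > 0 := by
        apply mul_pos_of_neg_of_neg <;> nlinarith
      nlinarith
    -- MVT on [y₁, y₂]
    obtain ⟨d, hd, hdeq⟩ := hill_mvt hyy
    have hdd : Real.cosh x₂ < Real.cosh d := by
      rw [Real.cosh_lt_cosh, abs_of_pos hx₂, abs_of_neg (by linarith [hd.2] : d < 0)]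
      linarith [hd.2]
    have hdh := hill'_lt_hill' hdd
    nlinarith [hd.1, hd.2]
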